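/- Let G be a simple signed graph on vertex set V and let U ⊆ V be such that G has no positive edge between U and V − U, and every vertex of U is adjacent to some positive edge. Then the fixed sets of G are exactly the sets S ∪ S' where S is a fixed set of G[U] and S' is a fixed set of G − U − 𝒩_G(S). -/

import Mathlib

/-- `S` is a fixed set of the conjunctive network of the simple signed graph
(positive edges `pos`, negative edges `neg`) induced on the vertex set `U`. -/
def FixedOn {V : Type*} (pos neg : V → V → Prop) (U S : Set V) : Prop :=
  S ⊆ U ∧ ∀ v ∈ U,
    (v ∈ S ↔ (∀ u ∈ U, pos u v → u ∈ S) ∧ (∀ u ∈ U, neg u v → u ∉ S))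

/-- `S` is a fixed set of the whole simple signed graph. -/
def IsFixedSet {V : Type*} (pos neg : V → V → Prop) (S : Set V) : Prop :=
  ∀ v, v ∈ S ↔ (∀ u, pos u v → u ∈ S) ∧ (∀ u, neg u v → u ∉ S)

/-- `𝒩(S)`: the union of `N(S)` with all connected components of the positive
subgraph meeting `N(S)`. -/
def calN {V : Type*} (pos neg : V → V → Prop) (S : Set V) : Set V :=
  {v | ∃ w, (∃ u ∈ S, pos u w ∨ neg u w) ∧ Relation.ReflTransGen pos w v}

/-- If there is no positive edge between `U` and its complement and every vertex of `U`
is adjacent to some positive edge, then the fixed sets of `G` are exactly the sets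
`S ∪ S'` with `S` a fixed set of `G[U]` and `S'` a fixed set of `G − U − 𝒩_G(S)`. -/
theorem stmt6 {V : Type*} [Fintype V] (pos neg : V → V → Prop)
    (hps : Symmetric pos) (hns : Symmetric neg)
    (hpi : ∀ v, ¬ pos v v) (hni : ∀ v, ¬ neg v v)
    (hd : ∀ u v, pos u v → ¬ neg u v)
    (U : Set V) (hU : ∀ u ∈ U, ∀ v, v ∉ U → ¬ pos u v)
    (hUpos : ∀ v ∈ U, ∃ u, pos u v) :
    ∀ T : Set V, IsFixedSet pos neg T ↔
      ∃ S S' : Set V, FixedOn pos neg U S ∧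
        FixedOn pos neg (U ∪ calN pos neg S)ᶜ S' ∧ T = S ∪ S' := by
  have posU : ∀ u ∈ U, ∀ v, pos u v → v ∈ U := by
    intro u hu v hp
    by_contra hv; exact hU u hu v hv hp
  have rtU : ∀ x y, x ∈ U → Relation.ReflTransGen pos x y → y ∈ U := by
    intro x y hx h
    induction h with
    | refl => exact hx
    | tail _ hp ih => exact posU _ ih _ hp
  intro T
  constructor
  · -- forward direction
    intro hT
    have posT : ∀ x y, x ∈ T → pos x y → y ∈ T := by
      intro x y hx hp
      exact ((hT x).1 hx).1 y (hps hp)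
    have rtT : ∀ x y, x ∈ T → Relation.ReflTransGen pos x y → y ∈ T := by
      intro x y hx h
      induction h with
      | refl => exact hx
      | tail _ hp ih => exact posT _ _ ih hp
    have calNT : ∀ v ∈ calN pos neg (T ∩ U), v ∈ T → v ∈ U := by
      rintro v ⟨w, ⟨u₀, hu₀, hedge⟩, hchain⟩ hv
      have hrev : Relation.ReflTransGen pos v w :=
        by haveI : Std.Symm pos := ⟨fun _ _ h => hps h⟩; exact Relation.ReflTransGen.symmetric.symm _ _ hchain
      have hwT : w ∈ T := rtT v w hv hrev
      rcases hedge with hp | hn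
      · exact rtU w v (posU u₀ hu₀.2 w hp) hchain
      · exact absurd hwT (((hT u₀).1 hu₀.1).2 w (hns hn))
    refine ⟨T ∩ U, T \ U, ?_, ?_, ?_⟩
    · -- FixedOn pos neg U (T ∩ U)
      refine ⟨Set.inter_subset_right, ?_⟩
      intro v hv
      constructor
      · rintro ⟨hvT, -⟩
        constructor
        · intro u hu hp; exact ⟨((hT v).1 hvT).1 u hp, hu⟩
        · intro u hu hn hu'; exact ((hT v).1 hvT).2 u hn hu'.1
      · rintro ⟨hpos, -⟩
        obtain ⟨u, hpu⟩ := hUpos v hv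
        have huU : u ∈ U := posU v hv u (hps hpu)
        have huS : u ∈ T ∩ U := hpos u huU hpu
        exact ⟨((hT u).1 huS.1).1 v (hps hpu), hv⟩
    · -- FixedOn on the complement
      constructor
      · intro v hv
        rw [Set.mem_compl_iff, Set.mem_union]
        push_neg
        exact ⟨hv.2, fun hc => hv.2 (calNT v hc hv.1)⟩
      · intro v hv
        rw [Set.mem_compl_iff, Set.mem_union] at hv
        push_neg at hv
        obtain ⟨hvU, hvN⟩ := hv
        constructor
        · rintro ⟨hvT, -⟩
          refine ⟨?_, ?_⟩
          · intro u hu hp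
            have huT : u ∈ T := ((hT v).1 hvT).1 u hp
            rw [Set.mem_compl_iff, Set.mem_union] at hu
            push_neg at hu
            exact ⟨huT, hu.1⟩
          · rintro u hu hn ⟨huT, -⟩
            exact ((hT v).1 hvT).2 u hn huT
        · rintro ⟨hpos, hneg⟩
          have hvT : v ∈ T := by
            rw [hT v]
            constructor
            · intro u hp
              by_cases huU : u ∈ U
              · exact absurd (posU u huU v hp) hvU
              by_cases huN : u ∈ calN pos neg (T ∩ U)
              · obtain ⟨w, hw, hchain⟩ := huN
                exact absurd ⟨w, hw, hchain.tail hp⟩ hvN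
              · have hu : u ∈ (U ∪ calN pos neg (T ∩ U))ᶜ := by
                  rw [Set.mem_compl_iff, Set.mem_union]; push_neg; exact ⟨huU, huN⟩
                exact (hpos u hu hp).1
            · intro u hn huT
              by_cases huU : u ∈ U
              · exact hvN ⟨v, ⟨u, ⟨huT, huU⟩, Or.inr hn⟩, Relation.ReflTransGen.refl⟩
              by_cases huN : u ∈ calN pos neg (T ∩ U)
              · exact huU (calNT u huN huT)
              · have hu : u ∈ (U ∪ calN pos neg (T ∩ U))ᶜ := by
                  rw [Set.mem_compl_iff, Set.mem_union]; push_neg; exact ⟨huU, huN⟩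
                exact hneg u hu hn ⟨huT, huU⟩
          exact ⟨hvT, hvU⟩
    · -- T = (T ∩ U) ∪ (T \ U)
      ext v
      simp only [Set.mem_union, Set.mem_inter_iff, Set.mem_diff]
      constructor
      · intro hv; by_cases h : v ∈ U
        · exact Or.inl ⟨hv, h⟩
        · exact Or.inr ⟨hv, h⟩
      · rintro (⟨h, -⟩ | ⟨h, -⟩) <;> exact h
  · -- backward direction
    rintro ⟨S, S', ⟨hSsub, hSfix⟩, ⟨hS'sub, hS'fix⟩, rfl⟩
    have unW : ∀ x, x ∈ (U ∪ calN pos neg S)ᶜ → x ∉ U ∧ x ∉ calN pos neg S := by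
      intro x h
      rw [Set.mem_compl_iff, Set.mem_union] at h
      push_neg at h; exact h
    have mkW : ∀ x, x ∉ U → x ∉ calN pos neg S → x ∈ (U ∪ calN pos neg S)ᶜ := by
      intro x h1 h2
      rw [Set.mem_compl_iff, Set.mem_union]; push_neg; exact ⟨h1, h2⟩
    intro v
    by_cases hvU : v ∈ U
    · have hvS' : v ∉ S' := fun h => (unW v (hS'sub h)).1 hvU
      constructor
      · rintro (hvS | hvS'')
        · obtain ⟨hpos, hneg⟩ := (hSfix v hvU).1 hvS
          refine ⟨?_, ?_⟩
          · intro u hp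
            exact Or.inl (hpos u (posU v hvU u (hps hp)) hp)
          · rintro u hn (huS | huS')
            · exact hneg u (hSsub huS) hn huS
            · exact (unW u (hS'sub huS')).2
                ⟨u, ⟨v, hvS, Or.inr (hns hn)⟩, Relation.ReflTransGen.refl⟩
        · exact absurd hvS'' hvS'
      · rintro ⟨hpos, hneg⟩
        refine Or.inl ((hSfix v hvU).2 ⟨?_, ?_⟩)
        · intro u huU hp
          rcases hpos u hp with h | h
          · exact h
          · exact absurd huU (unW u (hS'sub h)).1
        · intro u huU hn huS
          exact hneg u hn (Or.inl huS)
    · by_cases hvN : v ∈ calN pos neg S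
      · have hvT : v ∉ S ∪ S' := by
          rintro (h | h)
          · exact hvU (hSsub h)
          · exact (unW v (hS'sub h)).2 hvN
        constructor
        · intro h; exact absurd h hvT
        · rintro ⟨hpos, hneg⟩
          exfalso
          obtain ⟨w, hw, hchain⟩ := hvN
          rcases Relation.ReflTransGen.cases_tail hchain with heq | ⟨x, hwx, hxv⟩
          · subst heq
            obtain ⟨u₀, hu₀, hedge⟩ := hw
            rcases hedge with hp | hn
            · exact hvU (posU u₀ (hSsub hu₀) v hp)
            · exact hneg u₀ hn (Or.inl hu₀)
          · have hxN : x ∈ calN pos neg S := ⟨w, hw, hwx⟩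
            have hxU : x ∉ U := fun h => hU x h v hvU hxv
            rcases hpos x hxv with h | h
            · exact hxU (hSsub h)
            · exact (unW x (hS'sub h)).2 hxN
      · have hvW : v ∈ (U ∪ calN pos neg S)ᶜ := mkW v hvU hvN
        have hvS : v ∉ S := fun h => hvU (hSsub h)
        constructor
        · rintro (h | hvS')
          · exact absurd h hvS
          · obtain ⟨hpos, hneg⟩ := (hS'fix v hvW).1 hvS'
            refine ⟨?_, ?_⟩
            · intro u hp
              by_cases huU : u ∈ U
              · exact absurd (posU u huU v hp) hvU
              by_cases huN : u ∈ calN pos neg S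
              · obtain ⟨w, hw, hchain⟩ := huN
                exact absurd ⟨w, hw, hchain.tail hp⟩ hvN
              · exact Or.inr (hpos u (mkW u huU huN) hp)
            · rintro u hn (huS | huS')
              · exact hvN ⟨v, ⟨u, huS, Or.inr hn⟩, Relation.ReflTransGen.refl⟩
              · exact hneg u (hS'sub huS') hn huS'
        · rintro ⟨hpos, hneg⟩
          refine Or.inr ((hS'fix v hvW).2 ⟨?_, ?_⟩)
          · intro u huW hp
            rcases hpos u hp with h | h
            · exact absurd (hSsub h) (unW u huW).1
            · exact h
          · intro u huW hn huS'
            exact hneg u hn (Or.inr huS')
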